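/- Let {u_1, …, u_{m−1}} be an orthonormal basis of D2. Then for all v1, v2, v3, v4 ∈ D2: K(L(v1,v2), L(v3,v4)) = μ·⟨L(v1,v2),L(v3,v4)⟩·e1 + μη·⟨v1,v2⟩·L(v3,v4) + Σ_{i=1}^{m−1} ⟨L(v1,u_i),L(v3,v4)⟩·L(u_i,v2) + Σ_{i=1}^{m−1} ⟨L(v2,u_i),L(v3,v4)⟩·L(u_i,v1). -/
import Mathlib


open scoped RealInnerProductSpace
open Module Submodule

noncomputable section

variable {V : Type*} [NormedAddCommGroup V] [InnerProductSpace ℝ V]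

/-- The curvature-type operator built from `ε` and the difference tensor `K`:
`R(X,Y)Z = ε(⟨Y,Z⟩X − ⟨X,Z⟩Y) − K(X,K(Y,Z)) + K(Y,K(X,Z))`. -/
def Rc (ε : ℝ) (K : V →ₗ[ℝ] V →ₗ[ℝ] V) (X Y Z : V) : V :=
  ε • (⟪Y, Z⟫ • X - ⟪X, Z⟫ • Y) - K X (K Y Z) + K Y (K X Z)

/-- The bilinear map `L(v₁,v₂) = K(v₁,v₂) − (λ₁/2)⟨v₁,v₂⟩ e₁`. -/
def Lop (lam1 : ℝ) (e1 : V) (K : V →ₗ[ℝ] V →ₗ[ℝ] V) (v1 v2 : V) : V :=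
  K v1 v2 - (lam1 / 2 * ⟪v1, v2⟫) • e1

/-- The distribution `D₂ = {v : v ⟂ e₁, K(e₁,v) = (λ₁/2)v}`. -/
def D2s (lam1 : ℝ) (e1 : V) (K : V →ₗ[ℝ] V →ₗ[ℝ] V) : Submodule ℝ V :=
  (ℝ ∙ e1)ᗮ ⊓ Module.End.eigenspace (K e1) (lam1 / 2)

/-- The distribution `D₃ = {w : w ⟂ e₁, K(e₁,w) = μw}`. -/
def D3s (mu : ℝ) (e1 : V) (K : V →ₗ[ℝ] V →ₗ[ℝ] V) : Submodule ℝ V :=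
  (ℝ ∙ e1)ᗮ ⊓ Module.End.eigenspace (K e1) mu

/-- The operator `P_v(ṽ) = K(v, L(v,ṽ))`, as a linear endomorphism of `V`. -/
def Pop (lam1 : ℝ) (e1 : V) (K : V →ₗ[ℝ] V →ₗ[ℝ] V) (v : V) : V →ₗ[ℝ] V :=
  (K v) ∘ₗ (K v - (lam1 / 2) •
    ((LinearMap.toSpanSingleton ℝ V e1) ∘ₗ (innerSL ℝ v).toLinearMap))

/-- The eigenspace `V_v(c)` of `P_v` within the orthogonal complement of `v` in `D₂`. -/
def Vvs (lam1 c : ℝ) (e1 : V) (K : V →ₗ[ℝ] V →ₗ[ℝ] V) (v : V) : Submodule ℝ V :=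
  D2s lam1 e1 K ⊓ (ℝ ∙ v)ᗮ ⊓ Module.End.eigenspace (Pop lam1 e1 K v) c

/-- Lemma 4.6: the formula for `K(L(v₁,v₂), L(v₃,v₄))` in terms of an orthonormal
basis `{u₁, …, u_{m-1}}` of `D₂`. -/
theorem stmt_8 {V : Type*} [NormedAddCommGroup V] [InnerProductSpace ℝ V]
    (n m : ℕ) (hn : finrank ℝ V = n) (hn2 : 2 ≤ n)
    (ε : ℝ) (hε : ε = 1 ∨ ε = -1)
    (K : V →ₗ[ℝ] V →ₗ[ℝ] V)
    (hKsymm : ∀ X Y : V, K X Y = K Y X)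
    (hKcub : ∀ X Y Z : V, ⟪K X Y, Z⟫ = ⟪K X Z, Y⟫)
    (hpar : ∀ X Y Z U : V,
      Rc ε K X Y (K Z U) = K (Rc ε K X Y Z) U + K Z (Rc ε K X Y U))
    (e1 : V) (he1 : ‖e1‖ = 1)
    (lam1 η μ τ : ℝ)
    (hlam1 : lam1 = ⟪K e1 e1, e1⟫) (hlam1pos : 0 < lam1)
    (hmax : ∀ u : V, ‖u‖ = 1 → ⟪K u u, u⟫ ≤ lam1)
    (hdisc : 0 < lam1 ^ 2 - 4 * ε)
    (hη : η = Real.sqrt (lam1 ^ 2 - 4 * ε) / 2)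
    (hμ : μ = (lam1 - Real.sqrt (lam1 ^ 2 - 4 * ε)) / 2)
    (hτ : τ = η * (η + lam1 / 2) / 4)
    (hm2 : 2 ≤ m) (hmn : m ≤ n - 1)
    (hdimD2 : finrank ℝ (D2s lam1 e1 K) = m - 1)
    (hsplit : (ℝ ∙ e1) ⊔ D2s lam1 e1 K ⊔ D3s μ e1 K = ⊤)
    (hLD3 : ∀ v1 ∈ D2s lam1 e1 K, ∀ v2 ∈ D2s lam1 e1 K,
      Lop lam1 e1 K v1 v2 ∈ D3s μ e1 K)
    (hKD2 : ∀ v ∈ D2s lam1 e1 K, ∀ w ∈ D3s μ e1 K, K v w ∈ D2s lam1 e1 K)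
    (u : Fin (m - 1) → V) (huD2 : ∀ i, u i ∈ D2s lam1 e1 K)
    (huON : Orthonormal ℝ u)
    (huspan : Submodule.span ℝ (Set.range u) = D2s lam1 e1 K) :
    ∀ v1 ∈ D2s lam1 e1 K, ∀ v2 ∈ D2s lam1 e1 K, ∀ v3 ∈ D2s lam1 e1 K,
      ∀ v4 ∈ D2s lam1 e1 K,
        K (Lop lam1 e1 K v1 v2) (Lop lam1 e1 K v3 v4) =
          (μ * ⟪Lop lam1 e1 K v1 v2, Lop lam1 e1 K v3 v4⟫) • e1 +
            (μ * η * ⟪v1, v2⟫) • Lop lam1 e1 K v3 v4 +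
            ∑ i, ⟪Lop lam1 e1 K v1 (u i), Lop lam1 e1 K v3 v4⟫ •
              Lop lam1 e1 K (u i) v2 +
            ∑ i, ⟪Lop lam1 e1 K v2 (u i), Lop lam1 e1 K v3 v4⟫ •
              Lop lam1 e1 K (u i) v1 := by
  -- scalar preliminaries
  have hηpos : 0 < η := by
    have h := Real.sqrt_pos.mpr hdisc
    rw [hη]; linarith
  have hη2 : η ^ 2 = lam1 ^ 2 / 4 - ε := by
    rw [hη, div_pow, Real.sq_sqrt hdisc.le]; ring
  have hμη : μ = lam1 / 2 - η := by rw [hμ, hη]; ring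
  have hε2 : ε = lam1 ^ 2 / 4 - η ^ 2 := by linarith
  subst hμη
  subst hε2
  -- basic inner product facts
  have hipe : ⟪e1, e1⟫ = 1 := by
    rw [real_inner_self_eq_norm_mul_norm, he1]; norm_num
  have hD2e : ∀ v ∈ D2s lam1 e1 K, ⟪e1, v⟫ = 0 := by
    intro v hv
    simp only [D2s, Submodule.mem_inf] at hv
    exact Submodule.inner_right_of_mem_orthogonal (Submodule.mem_span_singleton_self e1) hv.1
  have hD2K : ∀ v ∈ D2s lam1 e1 K, K e1 v = (lam1 / 2) • v := by
    intro v hv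
    simp only [D2s, Submodule.mem_inf] at hv
    exact Module.End.mem_eigenspace_iff.mp hv.2
  have hD3e : ∀ w ∈ D3s (lam1 / 2 - η) e1 K, ⟪e1, w⟫ = 0 := by
    intro w hw
    simp only [D3s, Submodule.mem_inf] at hw
    exact Submodule.inner_right_of_mem_orthogonal (Submodule.mem_span_singleton_self e1) hw.1
  have hD3K : ∀ w ∈ D3s (lam1 / 2 - η) e1 K, K e1 w = (lam1 / 2 - η) • w := by
    intro w hw
    simp only [D3s, Submodule.mem_inf] at hw
    exact Module.End.mem_eigenspace_iff.mp hw.2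
  -- D2 ⟂ D3
  have hD23 : ∀ v ∈ D2s lam1 e1 K, ∀ w ∈ D3s (lam1 / 2 - η) e1 K, ⟪v, w⟫ = 0 := by
    intro v hv w hw
    have h1 : ⟪K e1 v, w⟫ = ⟪K e1 w, v⟫ := hKcub e1 v w
    rw [hD2K v hv, hD3K w hw, real_inner_smul_left, real_inner_smul_left,
      real_inner_comm w v] at h1
    have h2 : η * ⟪w, v⟫ = 0 := by linear_combination h1
    rcases mul_eq_zero.mp h2 with h | h
    · exact absurd h (ne_of_gt hηpos)
    · rw [real_inner_comm]; exact h
  -- K e1 e1 = lam1 • e1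
  have hKe1e1 : K e1 e1 = lam1 • e1 := by
    have hy : ∀ x : V, ⟪x, K e1 e1 - lam1 • e1⟫ = 0 := by
      intro x
      have hx : x ∈ (ℝ ∙ e1) ⊔ D2s lam1 e1 K ⊔ D3s (lam1 / 2 - η) e1 K := by
        rw [hsplit]; exact Submodule.mem_top
      rcases Submodule.mem_sup.mp hx with ⟨ab, hab, c, hc, rfl⟩
      rcases Submodule.mem_sup.mp hab with ⟨s, hs, d, hd, rfl⟩
      rcases Submodule.mem_span_singleton.mp hs with ⟨t, rfl⟩
      have he : ⟪e1, K e1 e1 - lam1 • e1⟫ = 0 := by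
        rw [inner_sub_right, real_inner_smul_right, hipe, real_inner_comm, ← hlam1]; ring
      have hdd : ⟪d, K e1 e1 - lam1 • e1⟫ = 0 := by
        have h3 : ⟪d, K e1 e1⟫ = 0 := by
          rw [real_inner_comm, hKcub e1 e1 d, hD2K d hd, real_inner_smul_left,
            real_inner_comm, hD2e d hd, mul_zero]
        rw [inner_sub_right, h3, real_inner_smul_right, real_inner_comm, hD2e d hd]; ring
      have hcc : ⟪c, K e1 e1 - lam1 • e1⟫ = 0 := by
        have h3 : ⟪c, K e1 e1⟫ = 0 := by
          rw [real_inner_comm, hKcub e1 e1 c, hD3K c hc, real_inner_smul_left,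
            real_inner_comm, hD3e c hc, mul_zero]
        rw [inner_sub_right, h3, real_inner_smul_right, real_inner_comm, hD3e c hc]; ring
      rw [inner_add_left, inner_add_left, real_inner_smul_left, he, hdd, hcc]; ring
    have h0 := hy (K e1 e1 - lam1 • e1)
    rw [inner_self_eq_zero] at h0
    exact sub_eq_zero.mp h0
  -- decomposition of K on D2 × D2
  have hKdec : ∀ x y : V, K x y = Lop lam1 e1 K x y + (lam1 / 2 * ⟪x, y⟫) • e1 := by
    intro x y; simp [Lop]
  have hKe1K : ∀ x ∈ D2s lam1 e1 K, ∀ y ∈ D2s lam1 e1 K,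
      K e1 (K x y) = (lam1 / 2 - η) • Lop lam1 e1 K x y
        + (lam1 / 2 * ⟪x, y⟫ * lam1) • e1 := by
    intro x hx y hy
    rw [hKdec x y, map_add, map_smul, hKe1e1, hD3K _ (hLD3 x hx y hy), smul_smul]
  -- Lop as a linear map in the second slot
  have hLop_lin : ∀ x y : V, Lop lam1 e1 K x y =
      (K x - (lam1 / 2) • ((LinearMap.toSpanSingleton ℝ V e1) ∘ₗ
        (innerSL ℝ x).toLinearMap)) y := by
    intro x y
    simp [Lop, LinearMap.sub_apply, LinearMap.smul_apply, LinearMap.comp_apply,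
      LinearMap.toSpanSingleton_apply, smul_smul]
  have hLsymm : ∀ x y : V, Lop lam1 e1 K x y = Lop lam1 e1 K y x := by
    intro x y
    simp only [Lop, hKsymm x y, real_inner_comm x y]
  -- curvature closed forms
  have hRc2 : ∀ x ∈ D2s lam1 e1 K, ∀ y ∈ D2s lam1 e1 K,
      Rc (lam1 ^ 2 / 4 - η ^ 2) K x e1 y =
        (-η) • Lop lam1 e1 K x y + (η ^ 2 * ⟪x, y⟫) • e1 := by
    intro x hx y hy
    simp only [Rc]
    rw [hD2e y hy, hD2K y hy, map_smul, hKe1K x hx y hy, hKdec x y]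
    module
  have hRc3 : ∀ x ∈ D2s lam1 e1 K, ∀ w ∈ D3s (lam1 / 2 - η) e1 K,
      Rc (lam1 ^ 2 / 4 - η ^ 2) K x e1 w = η • K x w := by
    intro x hx w hw
    simp only [Rc]
    rw [hD3e w hw, hD23 x hx w hw, hD3K w hw, map_smul, hD2K _ (hKD2 x hx w hw)]
    module
  -- expansion of elements of D2 in the orthonormal basis
  have hexp : ∀ p ∈ D2s lam1 e1 K, p = ∑ i, ⟪u i, p⟫ • u i := by
    intro p hp
    have hON := orthonormal_iff_ite.mp huON
    have hyker : ∀ j, ⟪p - ∑ i, ⟪u i, p⟫ • u i, u j⟫ = 0 := by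
      intro j
      rw [inner_sub_left, sum_inner]
      have h1 : ∀ i ∈ Finset.univ, ⟪(⟪u i, p⟫ • u i : V), u j⟫
          = if i = j then ⟪u j, p⟫ else 0 := by
        intro i _
        rw [real_inner_smul_left, hON i j]
        by_cases h : i = j <;> simp [h]
      rw [Finset.sum_congr rfl h1, Finset.sum_ite_eq' Finset.univ j]
      simp [real_inner_comm p (u j)]
    have hmem : p - ∑ i, ⟪u i, p⟫ • u i ∈ Submodule.span ℝ (Set.range u) := by
      rw [huspan]
      exact Submodule.sub_mem _ hp
        (Submodule.sum_mem _ fun i _ => Submodule.smul_mem _ _ (huD2 i))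
    have hzero : ∀ x ∈ Submodule.span ℝ (Set.range u),
        ⟪p - ∑ i, ⟪u i, p⟫ • u i, x⟫ = 0 := by
      intro x hx
      induction hx using Submodule.span_induction with
      | mem x hx => obtain ⟨j, rfl⟩ := hx; exact hyker j
      | zero => simp
      | add a b _ _ ha hb => rw [inner_add_right, ha, hb, add_zero]
      | smul t a _ ha => rw [real_inner_smul_right, ha, mul_zero]
    have h0 := hzero _ hmem
    rw [inner_self_eq_zero] at h0
    exact (sub_eq_zero.mp h0)
  -- coefficients
  have hcoef : ∀ x ∈ D2s lam1 e1 K, ∀ w ∈ D3s (lam1 / 2 - η) e1 K, ∀ i,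
      ⟪u i, K x w⟫ = ⟪Lop lam1 e1 K x (u i), w⟫ := by
    intro x hx w hw i
    rw [real_inner_comm, hKcub x w (u i)]
    simp [Lop, inner_sub_left, real_inner_smul_left, hD3e w hw]
  -- the key computation
  have key : ∀ v1 ∈ D2s lam1 e1 K, ∀ v2 ∈ D2s lam1 e1 K,
      ∀ w ∈ D3s (lam1 / 2 - η) e1 K,
      K (Lop lam1 e1 K v1 v2) w =
        ((lam1 / 2 - η) * ⟪Lop lam1 e1 K v1 v2, w⟫) • e1 +
          ((lam1 / 2 - η) * η * ⟪v1, v2⟫) • w +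
          ∑ i, ⟪Lop lam1 e1 K v1 (u i), w⟫ • Lop lam1 e1 K (u i) v2 +
          ∑ i, ⟪Lop lam1 e1 K v2 (u i), w⟫ • Lop lam1 e1 K (u i) v1 := by
    intro v1 hv1 v2 hv2 w hw
    have hp : K v2 w ∈ D2s lam1 e1 K := hKD2 v2 hv2 w hw
    have hq : K v1 w ∈ D2s lam1 e1 K := hKD2 v1 hv1 w hw
    have hv1p : ⟪v1, K v2 w⟫ = ⟪Lop lam1 e1 K v1 v2, w⟫ := by
      rw [real_inner_comm, hKcub v2 w v1, hKsymm v2 v1, hKdec v1 v2, inner_add_left,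
        real_inner_smul_left, hD3e w hw, mul_zero, add_zero]
    have hv2q : ⟪v2, K v1 w⟫ = ⟪Lop lam1 e1 K v1 v2, w⟫ := by
      rw [real_inner_comm, hKcub v1 w v2, hKdec v1 v2, inner_add_left,
        real_inner_smul_left, hD3e w hw, mul_zero, add_zero]
    have hpe : K v2 w = ∑ i, ⟪Lop lam1 e1 K v2 (u i), w⟫ • u i := by
      rw [hexp _ hp]
      exact Finset.sum_congr rfl fun i _ => by rw [hcoef v2 hv2 w hw i]
    have hqe : K v1 w = ∑ i, ⟪Lop lam1 e1 K v1 (u i), w⟫ • u i := by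
      rw [hexp _ hq]
      exact Finset.sum_congr rfl fun i _ => by rw [hcoef v1 hv1 w hw i]
    have hS1 : ∑ i, ⟪Lop lam1 e1 K v1 (u i), w⟫ • Lop lam1 e1 K (u i) v2
        = Lop lam1 e1 K v2 (K v1 w) := by
      conv_rhs => rw [hqe, hLop_lin v2, map_sum]
      refine Finset.sum_congr rfl fun i _ => ?_
      rw [map_smul, ← hLop_lin, hLsymm (u i) v2]
    have hS2 : ∑ i, ⟪Lop lam1 e1 K v2 (u i), w⟫ • Lop lam1 e1 K (u i) v1
        = Lop lam1 e1 K v1 (K v2 w) := by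
      conv_rhs => rw [hpe, hLop_lin v1, map_sum]
      refine Finset.sum_congr rfl fun i _ => ?_
      rw [map_smul, ← hLop_lin, hLsymm (u i) v1]
    have E := hpar v1 e1 v2 w
    rw [hRc2 v1 hv1 (K v2 w) hp, hRc2 v1 hv1 v2 hv2, hRc3 v1 hv1 w hw] at E
    simp only [map_add, map_smul, LinearMap.add_apply, LinearMap.smul_apply] at E
    rw [hD3K w hw, hv1p, hKdec v2 (K v1 w), hv2q] at E
    rw [hS1, hS2]
    refine smul_right_injective V (neg_ne_zero.mpr (ne_of_gt hηpos)) ?_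
    linear_combination (norm := module) -E
  intro v1 h1 v2 h2 v3 h3 v4 h4
  exact key v1 h1 v2 h2 (Lop lam1 e1 K v3 v4) (hLD3 v3 h3 v4 h4)


end
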